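/- arXiv:2302.09273 — 4 statements merged into one kernel-verified Lean document; each statement's English description precedes it below -/
import Mathlib

section
/- Let S be a nonempty finite state space and A a nonempty finite action space, let r : S × A → ℝ be a reward function with r(s,a) ∈ [0,1] for all (s,a), and let γ ∈ [0,1) be a discount factor. Let T₁ and T₂ be two transition kernels on (S, A) that are ε-close in L1, i.e. Σ_{s'∈S} |T₁(s,a,s') − T₂(s,a,s')| ≤ ε for every (s,a) ∈ S × A. Then for every deterministic stationary policy π : S → A and every state s ∈ S, |V^π_{T₁}(s) − V^π_{T₂}(s)| ≤ ε/(1−γ)², i.e. ‖V^π_{T₁} − V^π_{T₂}‖_∞ ≤ ε/(1−γ)². -/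
open Finset

/-- **Value-function perturbation bound for a fixed policy.**
If two transition kernels `T₁`, `T₂` on a finite MDP with rewards in `[0,1]` and discount
`γ ∈ [0,1)` are `ε`-close in `L1` for every state-action pair, then for every deterministic
stationary policy `π` the corresponding value functions (characterised by their Bellman
equations) satisfy `|V₁ s - V₂ s| ≤ ε / (1 - γ)²` for every state `s`. -/
theorem value_diff_le_of_kernel_close
    {S A : Type*} [Fintype S] [Nonempty S] [Fintype A] [Nonempty A]
    (r : S → A → ℝ) (hr : ∀ s a, 0 ≤ r s a ∧ r s a ≤ 1)
    (γ : ℝ) (hγ0 : 0 ≤ γ) (hγ1 : γ < 1)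
    (T₁ T₂ : S → A → S → ℝ)
    (hT₁0 : ∀ s a s', 0 ≤ T₁ s a s') (hT₁1 : ∀ s a, ∑ s', T₁ s a s' = 1)
    (hT₂0 : ∀ s a s', 0 ≤ T₂ s a s') (hT₂1 : ∀ s a, ∑ s', T₂ s a s' = 1)
    (ε : ℝ) (hclose : ∀ s a, ∑ s', |T₁ s a s' - T₂ s a s'| ≤ ε)
    (π : S → A) (V₁ V₂ : S → ℝ)
    (hV₁ : ∀ s, V₁ s = r s (π s) + γ * ∑ s', T₁ s (π s) s' * V₁ s')
    (hV₂ : ∀ s, V₂ s = r s (π s) + γ * ∑ s', T₂ s (π s) s' * V₂ s') :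
    ∀ s, |V₁ s - V₂ s| ≤ ε / (1 - γ) ^ 2 := by

  have hγ' : (0:ℝ) < 1 - γ := by linarith
  have hε : 0 ≤ ε := le_trans (Finset.sum_nonneg fun s' _ => abs_nonneg _)
    (hclose (Classical.arbitrary S) (Classical.arbitrary A))
  -- bound on V₂
  obtain ⟨s₂, -, hs₂⟩ := Finset.exists_max_image Finset.univ (fun s => |V₂ s|)
    ⟨Classical.arbitrary S, Finset.mem_univ _⟩
  have hB : ∀ s, |V₂ s| ≤ 1 / (1 - γ) := by
    have key : |V₂ s₂| ≤ 1 + γ * |V₂ s₂| := by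
      calc |V₂ s₂| = |r s₂ (π s₂) + γ * ∑ s', T₂ s₂ (π s₂) s' * V₂ s'| := by rw [← hV₂]
      _ ≤ |r s₂ (π s₂)| + |γ * ∑ s', T₂ s₂ (π s₂) s' * V₂ s'| := abs_add_le _ _
      _ ≤ 1 + γ * |V₂ s₂| := by
          gcongr ?_ + ?_
          · rw [abs_of_nonneg (hr s₂ (π s₂)).1]; exact (hr s₂ (π s₂)).2
          · rw [abs_mul, abs_of_nonneg hγ0]
            have h1 : |∑ s', T₂ s₂ (π s₂) s' * V₂ s'| ≤ ∑ s', |T₂ s₂ (π s₂) s' * V₂ s'| :=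
              Finset.abs_sum_le_sum_abs _ _
            have h2 : ∑ s', |T₂ s₂ (π s₂) s' * V₂ s'| ≤ ∑ s', T₂ s₂ (π s₂) s' * |V₂ s₂| := by
              apply Finset.sum_le_sum
              intro i _
              rw [abs_mul, abs_of_nonneg (hT₂0 _ _ _)]
              exact mul_le_mul_of_nonneg_left (hs₂ i (Finset.mem_univ i)) (hT₂0 _ _ _)
            have h3 : ∑ s', T₂ s₂ (π s₂) s' * |V₂ s₂| = |V₂ s₂| := by
              rw [← Finset.sum_mul, hT₂1, one_mul]
            have := (h1.trans h2).trans_eq h3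
            exact mul_le_mul_of_nonneg_left this hγ0
    intro s
    have h2 : |V₂ s₂| ≤ 1 / (1 - γ) := by
      rw [le_div_iff₀ hγ']; nlinarith
    exact (hs₂ s (Finset.mem_univ s)).trans h2
  obtain ⟨s₀, -, hs₀⟩ := Finset.exists_max_image Finset.univ (fun s => |V₁ s - V₂ s|)
    ⟨Classical.arbitrary S, Finset.mem_univ _⟩
  set D := |V₁ s₀ - V₂ s₀| with hD
  have hsum : (∑ s', T₁ s₀ (π s₀) s' * V₁ s') - ∑ s', T₂ s₀ (π s₀) s' * V₂ s'
      = (∑ s', T₁ s₀ (π s₀) s' * (V₁ s' - V₂ s'))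
        + ∑ s', (T₁ s₀ (π s₀) s' - T₂ s₀ (π s₀) s') * V₂ s' := by
    rw [← Finset.sum_add_distrib, ← Finset.sum_sub_distrib]
    exact Finset.sum_congr rfl fun i _ => by ring
  have expand : V₁ s₀ - V₂ s₀ = γ * ((∑ s', T₁ s₀ (π s₀) s' * (V₁ s' - V₂ s'))
      + ∑ s', (T₁ s₀ (π s₀) s' - T₂ s₀ (π s₀) s') * V₂ s') := by
    rw [hV₁ s₀, hV₂ s₀, ← hsum]; ring
  have hX : |∑ s', T₁ s₀ (π s₀) s' * (V₁ s' - V₂ s')| ≤ D := by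
    calc |∑ s', T₁ s₀ (π s₀) s' * (V₁ s' - V₂ s')|
        ≤ ∑ s', |T₁ s₀ (π s₀) s' * (V₁ s' - V₂ s')| := Finset.abs_sum_le_sum_abs _ _
      _ ≤ ∑ s', T₁ s₀ (π s₀) s' * D := by
          apply Finset.sum_le_sum
          intro i _
          rw [abs_mul, abs_of_nonneg (hT₁0 _ _ _)]
          exact mul_le_mul_of_nonneg_left (hs₀ i (Finset.mem_univ i)) (hT₁0 _ _ _)
      _ = D := by rw [← Finset.sum_mul, hT₁1, one_mul]
  have hY : |∑ s', (T₁ s₀ (π s₀) s' - T₂ s₀ (π s₀) s') * V₂ s'| ≤ ε * (1 / (1 - γ)) := by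
    calc |∑ s', (T₁ s₀ (π s₀) s' - T₂ s₀ (π s₀) s') * V₂ s'|
        ≤ ∑ s', |(T₁ s₀ (π s₀) s' - T₂ s₀ (π s₀) s') * V₂ s'| := Finset.abs_sum_le_sum_abs _ _
      _ ≤ ∑ s', |T₁ s₀ (π s₀) s' - T₂ s₀ (π s₀) s'| * (1 / (1 - γ)) := by
          apply Finset.sum_le_sum
          intro i _
          rw [abs_mul]
          exact mul_le_mul_of_nonneg_left (hB i) (abs_nonneg _)
      _ = (∑ s', |T₁ s₀ (π s₀) s' - T₂ s₀ (π s₀) s'|) * (1 / (1 - γ)) := by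
          rw [Finset.sum_mul]
      _ ≤ ε * (1 / (1 - γ)) := by
          apply mul_le_mul_of_nonneg_right (hclose s₀ (π s₀))
          positivity
  have key : D ≤ γ * D + γ * (ε * (1 / (1 - γ))) := by
    calc D = |γ * (_ + _)| := by rw [hD, expand]
      _ = γ * |_ + _| := by rw [abs_mul, abs_of_nonneg hγ0]
      _ ≤ γ * (D + ε * (1 / (1 - γ))) := by
          apply mul_le_mul_of_nonneg_left _ hγ0
          exact (abs_add_le _ _).trans (add_le_add hX hY)
      _ = γ * D + γ * (ε * (1 / (1 - γ))) := by ring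
  have hfin : D ≤ ε / (1 - γ) ^ 2 := by
    rw [le_div_iff₀ (by positivity : (0:ℝ) < (1 - γ) ^ 2)]
    have h1 : D * (1 - γ) ≤ γ * ε * (1 / (1 - γ)) := by nlinarith
    have h2 : D * (1 - γ) * (1 - γ) ≤ γ * ε * (1 / (1 - γ)) * (1 - γ) :=
      mul_le_mul_of_nonneg_right h1 hγ'.le
    have h3 : γ * ε * (1 / (1 - γ)) * (1 - γ) = γ * ε := by field_simp
    nlinarith
  intro s
  exact (hs₀ s (Finset.mem_univ s)).trans hfin
end

section
/- Let S be a nonempty finite state space and A a nonempty finite action space, let r : S × A → ℝ be a reward function with r(s,a) ∈ [0,1] for all (s,a), and let γ ∈ [0,1) be a discount factor. Let T₁ and T₂ be two transition kernels on (S, A) that are ε-close in L1, i.e. Σ_{s'∈S} |T₁(s,a,s') − T₂(s,a,s')| ≤ ε for every (s,a) ∈ S × A. Then the optimal value functions satisfy |V*_{T₁}(s) − V*_{T₂}(s)| ≤ 2ε/(1−γ)² for every state s ∈ S, i.e. ‖V*_{T₁} − V*_{T₂}‖_∞ ≤ 2ε/(1−γ)². -/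
open Finset

private lemma fixedpoint_abs_bound {S : Type*} [Fintype S] [Nonempty S]
    (W : S → ℝ) (c γ : ℝ) (hγ0 : 0 ≤ γ) (hγ1 : γ < 1)
    (h : ∀ s, |W s| ≤ c + γ * (Finset.univ.sup' Finset.univ_nonempty (fun s' => |W s'|))) :
    ∀ s, |W s| ≤ c / (1 - γ) := by
  set M := Finset.univ.sup' Finset.univ_nonempty (fun s' => |W s'|) with hM
  have hMle : M ≤ c + γ * M := Finset.sup'_le _ _ (fun s _ => h s)
  have h1γ : 0 < 1 - γ := by linarith
  have hMb : M ≤ c / (1 - γ) := by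
    rw [le_div_iff₀ h1γ]; nlinarith
  intro s
  exact le_trans (Finset.le_sup' (fun s' => |W s'|) (Finset.mem_univ s)) hMb

private lemma abs_sum_kernel_le {S : Type*} [Fintype S]
    (p f : S → ℝ) (hp : ∀ s, 0 ≤ p s) (hp1 : ∑ s, p s = 1)
    (M : ℝ) (hf : ∀ s, |f s| ≤ M) :
    |∑ s, p s * f s| ≤ M := by
  calc |∑ s, p s * f s| ≤ ∑ s, |p s * f s| := Finset.abs_sum_le_sum_abs _ _
    _ = ∑ s, p s * |f s| := by
        refine Finset.sum_congr rfl (fun s _ => ?_)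
        rw [abs_mul, abs_of_nonneg (hp s)]
    _ ≤ ∑ s, p s * M := Finset.sum_le_sum (fun s _ => mul_le_mul_of_nonneg_left (hf s) (hp s))
    _ = M := by rw [← Finset.sum_mul, hp1, one_mul]

private lemma abs_sum_diff_le {S : Type*} [Fintype S]
    (d f : S → ℝ) (ε : ℝ) (hd : ∑ s, |d s| ≤ ε)
    (M : ℝ) (hM : 0 ≤ M) (hf : ∀ s, |f s| ≤ M) :
    |∑ s, d s * f s| ≤ ε * M := by
  calc |∑ s, d s * f s| ≤ ∑ s, |d s * f s| := Finset.abs_sum_le_sum_abs _ _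
    _ = ∑ s, |d s| * |f s| := by simp [abs_mul]
    _ ≤ ∑ s, |d s| * M :=
        Finset.sum_le_sum (fun s _ => mul_le_mul_of_nonneg_left (hf s) (abs_nonneg _))
    _ = (∑ s, |d s|) * M := by rw [Finset.sum_mul]
    _ ≤ ε * M := mul_le_mul_of_nonneg_right hd hM

/-- **Optimal value-function perturbation bound.**
If two transition kernels `T₁`, `T₂` on a finite MDP with rewards in `[0,1]` and discount
`γ ∈ [0,1)` are `ε`-close in `L1` for every state-action pair, then the optimal value
functions (pointwise suprema over deterministic stationary policies of the value functions,
each characterised by its Bellman equation) satisfy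
`|V*₁ s - V*₂ s| ≤ 2ε / (1 - γ)²` for every state `s`. -/
theorem optimal_value_diff_le_of_kernel_close
    {S A : Type*} [Fintype S] [Nonempty S] [Fintype A] [Nonempty A]
    (r : S → A → ℝ) (hr : ∀ s a, 0 ≤ r s a ∧ r s a ≤ 1)
    (γ : ℝ) (hγ0 : 0 ≤ γ) (hγ1 : γ < 1)
    (T₁ T₂ : S → A → S → ℝ)
    (hT₁0 : ∀ s a s', 0 ≤ T₁ s a s') (hT₁1 : ∀ s a, ∑ s', T₁ s a s' = 1)
    (hT₂0 : ∀ s a s', 0 ≤ T₂ s a s') (hT₂1 : ∀ s a, ∑ s', T₂ s a s' = 1)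
    (ε : ℝ) (hclose : ∀ s a, ∑ s', |T₁ s a s' - T₂ s a s'| ≤ ε)
    (V₁ V₂ : (S → A) → S → ℝ)
    (hV₁ : ∀ (π : S → A) (s : S),
      V₁ π s = r s (π s) + γ * ∑ s', T₁ s (π s) s' * V₁ π s')
    (hV₂ : ∀ (π : S → A) (s : S),
      V₂ π s = r s (π s) + γ * ∑ s', T₂ s (π s) s' * V₂ π s')
    (Vstar₁ Vstar₂ : S → ℝ)
    (hVstar₁ : ∀ s, Vstar₁ s = ⨆ π : S → A, V₁ π s)
    (hVstar₂ : ∀ s, Vstar₂ s = ⨆ π : S → A, V₂ π s) :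
    ∀ s, |Vstar₁ s - Vstar₂ s| ≤ 2 * ε / (1 - γ) ^ 2 := by
  have h1γ : 0 < 1 - γ := by linarith
  have hε : 0 ≤ ε := by
    obtain ⟨s⟩ := ‹Nonempty S›; obtain ⟨a⟩ := ‹Nonempty A›
    exact le_trans (Finset.sum_nonneg (fun _ _ => abs_nonneg _)) (hclose s a)
  -- bound on V₂
  have hV₂bound : ∀ π s, |V₂ π s| ≤ 1 / (1 - γ) := by
    intro π
    apply fixedpoint_abs_bound _ _ _ hγ0 hγ1
    intro s
    set M := Finset.univ.sup' Finset.univ_nonempty (fun s' => |V₂ π s'|) with hM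
    have hMs : ∀ s', |V₂ π s'| ≤ M :=
      fun s' => Finset.le_sup' (fun t => |V₂ π t|) (Finset.mem_univ s')
    rw [hV₂ π s]
    have h1 : |r s (π s)| ≤ 1 := by
      rw [abs_of_nonneg (hr s (π s)).1]; exact (hr s (π s)).2
    have h2 : |∑ s', T₂ s (π s) s' * V₂ π s'| ≤ M :=
      abs_sum_kernel_le _ _ (hT₂0 s (π s)) (hT₂1 s (π s)) M hMs
    calc |r s (π s) + γ * ∑ s', T₂ s (π s) s' * V₂ π s'|
        ≤ |r s (π s)| + |γ * ∑ s', T₂ s (π s) s' * V₂ π s'| := abs_add_le _ _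
      _ ≤ 1 + γ * M := by
          rw [abs_mul, abs_of_nonneg hγ0]
          exact add_le_add h1 (mul_le_mul_of_nonneg_left h2 hγ0)
  -- per-policy diff bound
  have hdiff : ∀ π s, |V₁ π s - V₂ π s| ≤ γ * (ε / (1 - γ)) / (1 - γ) := by
    intro π
    apply fixedpoint_abs_bound _ _ _ hγ0 hγ1
    intro s
    set M := Finset.univ.sup' Finset.univ_nonempty (fun s' => |V₁ π s' - V₂ π s'|) with hM
    have hMs : ∀ s', |V₁ π s' - V₂ π s'| ≤ M :=
      fun s' => Finset.le_sup' (fun t => |V₁ π t - V₂ π t|) (Finset.mem_univ s')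
    have key : V₁ π s - V₂ π s
        = γ * ((∑ s', T₁ s (π s) s' * (V₁ π s' - V₂ π s'))
            + ∑ s', (T₁ s (π s) s' - T₂ s (π s) s') * V₂ π s') := by
      have hsum : (∑ s', T₁ s (π s) s' * (V₁ π s' - V₂ π s'))
            + ∑ s', (T₁ s (π s) s' - T₂ s (π s) s') * V₂ π s'
          = (∑ s', T₁ s (π s) s' * V₁ π s') - ∑ s', T₂ s (π s) s' * V₂ π s' := by
        rw [← Finset.sum_add_distrib, ← Finset.sum_sub_distrib]
        exact Finset.sum_congr rfl (fun s' _ => by ring)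
      rw [hsum, hV₁ π s, hV₂ π s]; ring
    have h2 : |∑ s', T₁ s (π s) s' * (V₁ π s' - V₂ π s')| ≤ M :=
      abs_sum_kernel_le _ _ (hT₁0 s (π s)) (hT₁1 s (π s)) M hMs
    have h3 : |∑ s', (T₁ s (π s) s' - T₂ s (π s) s') * V₂ π s'| ≤ ε * (1 / (1 - γ)) :=
      abs_sum_diff_le _ _ ε (hclose s (π s)) _ (by positivity) (hV₂bound π)
    calc |V₁ π s - V₂ π s|
        = γ * |(∑ s', T₁ s (π s) s' * (V₁ π s' - V₂ π s'))
            + ∑ s', (T₁ s (π s) s' - T₂ s (π s) s') * V₂ π s'| := by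
          rw [key, abs_mul, abs_of_nonneg hγ0]
      _ ≤ γ * (M + ε * (1 / (1 - γ))) := by
          apply mul_le_mul_of_nonneg_left _ hγ0
          exact le_trans (abs_add_le _ _) (add_le_add h2 h3)
      _ = γ * (ε / (1 - γ)) + γ * M := by ring
  -- transfer to suprema
  intro s
  have hBdd₁ : BddAbove (Set.range fun π : S → A => V₁ π s) :=
    (Set.finite_range _).bddAbove
  have hBdd₂ : BddAbove (Set.range fun π : S → A => V₂ π s) :=
    (Set.finite_range _).bddAbove
  have hC : γ * (ε / (1 - γ)) / (1 - γ) ≤ 2 * ε / (1 - γ) ^ 2 := by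
    have e1 : γ * (ε / (1 - γ)) / (1 - γ) = γ * ε / (1 - γ) ^ 2 := by
      rw [mul_div_assoc', div_div, sq]
    rw [e1]
    gcongr
    nlinarith
  rw [hVstar₁ s, hVstar₂ s, abs_sub_le_iff]
  constructor
  · rw [sub_le_iff_le_add]
    apply ciSup_le
    intro π
    have := abs_sub_le_iff.mp (hdiff π s)
    calc V₁ π s ≤ V₂ π s + 2 * ε / (1 - γ) ^ 2 := by linarith [this.1, hC]
      _ ≤ (⨆ π : S → A, V₂ π s) + 2 * ε / (1 - γ) ^ 2 :=
          add_le_add_left (le_ciSup hBdd₂ π) _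
      _ = 2 * ε / (1 - γ) ^ 2 + ⨆ π : S → A, V₂ π s := add_comm _ _
  · rw [sub_le_iff_le_add]
    apply ciSup_le
    intro π
    have := abs_sub_le_iff.mp (hdiff π s)
    calc V₂ π s ≤ V₁ π s + 2 * ε / (1 - γ) ^ 2 := by linarith [this.2, hC]
      _ ≤ (⨆ π : S → A, V₁ π s) + 2 * ε / (1 - γ) ^ 2 :=
          add_le_add_left (le_ciSup hBdd₁ π) _
      _ = 2 * ε / (1 - γ) ^ 2 + ⨆ π : S → A, V₁ π s := add_comm _ _
end

section
/- (Performance gap for non-realisable models.) Let S be a nonempty finite state space and A a nonempty finite action space, let r : S × A → ℝ be a reward function with r(s,a) ∈ [0,1] for all (s,a), and let γ ∈ [0,1) be a discount factor. Let T*, T, and T̂ be three transition kernels on (S, A) such that Σ_{s'∈S} |T*(s,a,s') − T(s,a,s')| ≤ ε_Realise and Σ_{s'∈S} |T(s,a,s') − T̂(s,a,s')| ≤ ε_Estim for every (s,a) ∈ S × A. Let π̂ : S → A be an optimal policy for the MDP with kernel T̂, i.e. V^{π̂}_{T̂}(s) = V*_{T̂}(s) for all s. Then the performance gap of π̂ in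 the MDP with kernel T* satisfies ‖V*_{T*} − V^{π̂}_{T*}‖_∞ ≤ 3(ε_Estim + ε_Realise)/(1−γ)². -/
open Finset

lemma mdp_val_bound {S : Type*} [Fintype S] [Nonempty S]
    (γ : ℝ) (hγ0 : 0 ≤ γ) (hγ1 : γ < 1)
    (ρ : S → ℝ) (hρ : ∀ s, 0 ≤ ρ s ∧ ρ s ≤ 1)
    (K : S → S → ℝ) (hK0 : ∀ s s', 0 ≤ K s s') (hK1 : ∀ s, ∑ s', K s s' = 1)
    (V : S → ℝ) (hV : ∀ s, V s = ρ s + γ * ∑ s', K s s' * V s') :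
    ∀ s, |V s| ≤ 1 / (1 - γ) := by
  obtain ⟨s0, -, hs0⟩ := Finset.exists_max_image Finset.univ (fun s => |V s|)
    ⟨Classical.arbitrary S, mem_univ _⟩
  have hs0' : ∀ s, |V s| ≤ |V s0| := fun s => hs0 s (mem_univ s)
  have h1 : |∑ s', K s0 s' * V s'| ≤ |V s0| := by
    calc |∑ s', K s0 s' * V s'| ≤ ∑ s', |K s0 s' * V s'| := Finset.abs_sum_le_sum_abs _ _
      _ = ∑ s', K s0 s' * |V s'| := by
          refine Finset.sum_congr rfl fun s' _ => ?_
          rw [abs_mul, abs_of_nonneg (hK0 s0 s')]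
      _ ≤ ∑ s', K s0 s' * |V s0| :=
          Finset.sum_le_sum fun s' _ => mul_le_mul_of_nonneg_left (hs0' s') (hK0 s0 s')
      _ = |V s0| := by rw [← Finset.sum_mul, hK1, one_mul]
  have h2 : |V s0| ≤ 1 + γ * |V s0| := by
    calc |V s0| = |ρ s0 + γ * ∑ s', K s0 s' * V s'| := by rw [hV s0]
      _ ≤ |ρ s0| + |γ * ∑ s', K s0 s' * V s'| := abs_add_le _ _
      _ ≤ 1 + γ * |V s0| := by
          rw [abs_mul, abs_of_nonneg hγ0, abs_of_nonneg (hρ s0).1]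
          have h3 := (hρ s0).2
          have h4 := mul_le_mul_of_nonneg_left h1 hγ0
          linarith
  intro s
  refine (hs0' s).trans ?_
  rw [le_div_iff₀ (by linarith)]
  nlinarith [abs_nonneg (V s0)]

lemma mdp_sim_bound {S : Type*} [Fintype S] [Nonempty S]
    (γ : ℝ) (hγ0 : 0 ≤ γ) (hγ1 : γ < 1)
    (ρ : S → ℝ) (hρ : ∀ s, 0 ≤ ρ s ∧ ρ s ≤ 1)
    (K1 K2 : S → S → ℝ)
    (hK10 : ∀ s s', 0 ≤ K1 s s') (hK11 : ∀ s, ∑ s', K1 s s' = 1)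
    (hK20 : ∀ s s', 0 ≤ K2 s s') (hK21 : ∀ s, ∑ s', K2 s s' = 1)
    (ε : ℝ) (hε : ∀ s, ∑ s', |K1 s s' - K2 s s'| ≤ ε)
    (V1 V2 : S → ℝ)
    (hV1 : ∀ s, V1 s = ρ s + γ * ∑ s', K1 s s' * V1 s')
    (hV2 : ∀ s, V2 s = ρ s + γ * ∑ s', K2 s s' * V2 s') :
    ∀ s, |V1 s - V2 s| ≤ ε / (1 - γ) ^ 2 := by
  have hεnn : 0 ≤ ε := le_trans (Finset.sum_nonneg fun s' _ => abs_nonneg _)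
    (hε (Classical.arbitrary S))
  have hB := mdp_val_bound γ hγ0 hγ1 ρ hρ K1 hK10 hK11 V1 hV1
  have h1γ : (0:ℝ) < 1 - γ := by linarith
  have hBnn : (0:ℝ) ≤ 1 / (1 - γ) := by positivity
  obtain ⟨s0, -, hs0⟩ := Finset.exists_max_image Finset.univ (fun s => |V1 s - V2 s|)
    ⟨Classical.arbitrary S, mem_univ _⟩
  have hs0' : ∀ s, |V1 s - V2 s| ≤ |V1 s0 - V2 s0| := fun s => hs0 s (mem_univ s)
  have hsplit : V1 s0 - V2 s0 =
      γ * (∑ s', (K1 s0 s' - K2 s0 s') * V1 s' + ∑ s', K2 s0 s' * (V1 s' - V2 s')) := by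
    have e : ∑ s', (K1 s0 s' - K2 s0 s') * V1 s' + ∑ s', K2 s0 s' * (V1 s' - V2 s')
        = ∑ s', K1 s0 s' * V1 s' - ∑ s', K2 s0 s' * V2 s' := by
      rw [← Finset.sum_add_distrib, ← Finset.sum_sub_distrib]
      exact Finset.sum_congr rfl fun s' _ => by ring
    rw [e, hV1 s0, hV2 s0]; ring
  have hA : |∑ s', (K1 s0 s' - K2 s0 s') * V1 s'| ≤ ε * (1 / (1 - γ)) := by
    calc |∑ s', (K1 s0 s' - K2 s0 s') * V1 s'| ≤ ∑ s', |(K1 s0 s' - K2 s0 s') * V1 s'| :=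
          Finset.abs_sum_le_sum_abs _ _
      _ ≤ ∑ s', |K1 s0 s' - K2 s0 s'| * (1 / (1 - γ)) := by
          refine Finset.sum_le_sum fun s' _ => ?_
          rw [abs_mul]
          exact mul_le_mul_of_nonneg_left (hB s') (abs_nonneg _)
      _ = (∑ s', |K1 s0 s' - K2 s0 s'|) * (1 / (1 - γ)) := by rw [Finset.sum_mul]
      _ ≤ ε * (1 / (1 - γ)) := mul_le_mul_of_nonneg_right (hε s0) hBnn
  have hC : |∑ s', K2 s0 s' * (V1 s' - V2 s')| ≤ |V1 s0 - V2 s0| := by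
    calc |∑ s', K2 s0 s' * (V1 s' - V2 s')| ≤ ∑ s', |K2 s0 s' * (V1 s' - V2 s')| :=
          Finset.abs_sum_le_sum_abs _ _
      _ = ∑ s', K2 s0 s' * |V1 s' - V2 s'| := by
          refine Finset.sum_congr rfl fun s' _ => ?_
          rw [abs_mul, abs_of_nonneg (hK20 s0 s')]
      _ ≤ ∑ s', K2 s0 s' * |V1 s0 - V2 s0| :=
          Finset.sum_le_sum fun s' _ => mul_le_mul_of_nonneg_left (hs0' s') (hK20 s0 s')
      _ = |V1 s0 - V2 s0| := by rw [← Finset.sum_mul, hK21, one_mul]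
  have habs : |V1 s0 - V2 s0| ≤ γ * (|∑ s', (K1 s0 s' - K2 s0 s') * V1 s'|
      + |∑ s', K2 s0 s' * (V1 s' - V2 s')|) := by
    rw [hsplit, abs_mul, abs_of_nonneg hγ0]
    exact mul_le_mul_of_nonneg_left (abs_add_le _ _) hγ0
  have hD : |V1 s0 - V2 s0| ≤ γ * (ε * (1 / (1 - γ))) + γ * |V1 s0 - V2 s0| := by
    nlinarith [mul_le_mul_of_nonneg_left (add_le_add hA hC) hγ0]
  intro s
  refine (hs0' s).trans ?_
  rw [le_div_iff₀ (pow_pos h1γ 2)]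
  have step1 : |V1 s0 - V2 s0| * (1 - γ) ≤ γ * ε * (1 / (1 - γ)) := by nlinarith
  calc |V1 s0 - V2 s0| * (1 - γ) ^ 2 = (|V1 s0 - V2 s0| * (1 - γ)) * (1 - γ) := by ring
    _ ≤ (γ * ε * (1 / (1 - γ))) * (1 - γ) := mul_le_mul_of_nonneg_right step1 h1γ.le
    _ = γ * ε := by field_simp
    _ ≤ ε := by nlinarith

/-- **Performance gap for non-realisable models.**
Let `T*` be the true kernel, `T` a proxy kernel with `∑_{s'} |T*(s,a,s') − T(s,a,s')| ≤ ε_Realise`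
and `T̂` an estimate with `∑_{s'} |T(s,a,s') − T̂(s,a,s')| ≤ ε_Estim`, for every `(s,a)`.
If `π̂` is an optimal policy for the MDP with kernel `T̂`, then its performance gap in the MDP
with kernel `T*` satisfies `‖V*_{T*} − V^{π̂}_{T*}‖_∞ ≤ 3(ε_Estim + ε_Realise)/(1−γ)²`. -/
theorem performance_gap_non_realisable
    {S A : Type*} [Fintype S] [Nonempty S] [Fintype A] [Nonempty A]
    (r : S → A → ℝ) (hr : ∀ s a, 0 ≤ r s a ∧ r s a ≤ 1)
    (γ : ℝ) (hγ0 : 0 ≤ γ) (hγ1 : γ < 1)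
    (Tstar T That : S → A → S → ℝ)
    (hTstar0 : ∀ s a s', 0 ≤ Tstar s a s') (hTstar1 : ∀ s a, ∑ s', Tstar s a s' = 1)
    (hT0 : ∀ s a s', 0 ≤ T s a s') (hT1 : ∀ s a, ∑ s', T s a s' = 1)
    (hThat0 : ∀ s a s', 0 ≤ That s a s') (hThat1 : ∀ s a, ∑ s', That s a s' = 1)
    (εRealise εEstim : ℝ)
    (hRealise : ∀ s a, ∑ s', |Tstar s a s' - T s a s'| ≤ εRealise)
    (hEstim : ∀ s a, ∑ s', |T s a s' - That s a s'| ≤ εEstim)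
    (Vs Vh : (S → A) → S → ℝ)
    (hVs : ∀ (π : S → A) (s : S),
      Vs π s = r s (π s) + γ * ∑ s', Tstar s (π s) s' * Vs π s')
    (hVh : ∀ (π : S → A) (s : S),
      Vh π s = r s (π s) + γ * ∑ s', That s (π s) s' * Vh π s')
    (VstarS VstarH : S → ℝ)
    (hVstarS : ∀ s, VstarS s = ⨆ π : S → A, Vs π s)
    (hVstarH : ∀ s, VstarH s = ⨆ π : S → A, Vh π s)
    (πhat : S → A) (hπhat : ∀ s, Vh πhat s = VstarH s) :
    ∀ s, |VstarS s - Vs πhat s| ≤ 3 * (εEstim + εRealise) / (1 - γ) ^ 2 := by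
  intro s
  have h1γ : (0:ℝ) < 1 - γ := by linarith
  set ε := εEstim + εRealise with hεdef
  have hεnn : 0 ≤ ε := by
    have a := hRealise s (Classical.arbitrary A)
    have b := hEstim s (Classical.arbitrary A)
    have a' : (0:ℝ) ≤ ∑ s', |Tstar s (Classical.arbitrary A) s' - T s (Classical.arbitrary A) s'| :=
      Finset.sum_nonneg fun _ _ => abs_nonneg _
    have b' : (0:ℝ) ≤ ∑ s', |T s (Classical.arbitrary A) s' - That s (Classical.arbitrary A) s'| :=
      Finset.sum_nonneg fun _ _ => abs_nonneg _
    linarith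
  have hTV : ∀ s a, ∑ s', |Tstar s a s' - That s a s'| ≤ ε := by
    intro s a
    calc ∑ s', |Tstar s a s' - That s a s'|
        ≤ ∑ s', (|Tstar s a s' - T s a s'| + |T s a s' - That s a s'|) :=
          Finset.sum_le_sum fun s' _ => by
            have := abs_sub_le (Tstar s a s') (T s a s') (That s a s'); linarith
      _ = (∑ s', |Tstar s a s' - T s a s'|) + ∑ s', |T s a s' - That s a s'| :=
          Finset.sum_add_distrib
      _ ≤ ε := by have := hRealise s a; have := hEstim s a; linarith
  have hsim : ∀ (π : S → A) (s : S), |Vs π s - Vh π s| ≤ ε / (1 - γ) ^ 2 := by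
    intro π
    exact mdp_sim_bound γ hγ0 hγ1 (fun s => r s (π s)) (fun s => hr s (π s))
      (fun s => Tstar s (π s)) (fun s => That s (π s))
      (fun s s' => hTstar0 s (π s) s') (fun s => hTstar1 s (π s))
      (fun s s' => hThat0 s (π s) s') (fun s => hThat1 s (π s))
      ε (fun s => hTV s (π s)) (Vs π) (Vh π) (hVs π) (hVh π)
  set D := ε / (1 - γ) ^ 2 with hDdef
  have hbddS : BddAbove (Set.range fun π : S → A => Vs π s) :=
    (Set.finite_range _).bddAbove
  have hbddH : BddAbove (Set.range fun π : S → A => Vh π s) :=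
    (Set.finite_range _).bddAbove
  have hstar : |VstarS s - VstarH s| ≤ D := by
    rw [hVstarS s, hVstarH s, abs_le]
    constructor
    · rw [neg_le, neg_sub]
      rw [sub_le_iff_le_add]
      refine ciSup_le fun π => ?_
      have := (hsim π s)
      have h2 : Vh π s ≤ Vs π s + D := by
        have := abs_le.mp (hsim π s); simp only [hDdef] at *; linarith [this.2]
      calc Vh π s ≤ Vs π s + D := h2
        _ ≤ (⨆ π : S → A, Vs π s) + D := add_le_add_left (le_ciSup hbddS π) D
        _ = D + ⨆ π : S → A, Vs π s := by ring
    · rw [sub_le_iff_le_add]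
      refine ciSup_le fun π => ?_
      have h2 : Vs π s ≤ Vh π s + D := by
        have := abs_le.mp (hsim π s); linarith [this.2]
      calc Vs π s ≤ Vh π s + D := h2
        _ ≤ (⨆ π : S → A, Vh π s) + D := add_le_add_left (le_ciSup hbddH π) D
        _ = D + ⨆ π : S → A, Vh π s := by ring
  have hhat : |VstarH s - Vs πhat s| ≤ D := by
    rw [← hπhat s, abs_sub_comm]
    exact hsim πhat s
  have htriangle := abs_sub_le (VstarS s) (VstarH s) (Vs πhat s)
  have hfinal : 2 * D ≤ 3 * (εEstim + εRealise) / (1 - γ) ^ 2 := by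
    rw [hDdef, hεdef, ← sub_nonneg]
    have e : 3 * (εEstim + εRealise) / (1 - γ) ^ 2
        - 2 * ((εEstim + εRealise) / (1 - γ) ^ 2)
        = (εEstim + εRealise) / (1 - γ) ^ 2 := by ring
    rw [e]
    have : (0:ℝ) ≤ εEstim + εRealise := hεdef ▸ hεnn
    positivity
  linarith
end

section
/- (Weissman-type L1 concentration of the empirical distribution.) Let p be a probability distribution on a finite set of cardinality S with S ≥ 2, let n ≥ 1, let X₁, …, Xₙ be i.i.d. samples from p, and let p̂ₙ be the empirical distribution, p̂ₙ(i) = (1/n)·#{k ≤ n : Xₖ = i}. Then for every δ ∈ (0,1], the probability that ‖p − p̂ₙ‖₁ ≥ √(2·log((2^S − 2)/δ)/n) is at most δ; consequently the probability that ‖p − p̂ₙ‖₁ ≥ √(2·S·log(2/δ)/n) is also at most δ. -/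
open MeasureTheory ProbabilityTheory Finset


lemma bern_mgf_bound (q : ℝ) (hq0 : 0 ≤ q) (hq1 : q ≤ 1) (t : ℝ) :
    1 - q + q * Real.exp t ≤ Real.exp (q * t + t ^ 2 / 8) := by
  have hpos : ∀ s : ℝ, 0 < 1 - q + q * Real.exp s := by
    intro s
    rcases eq_or_lt_of_le hq0 with h | h
    · simp [← h]
    · nlinarith [Real.exp_pos s]
  set g : ℝ → ℝ := fun s => q * s + s ^ 2 / 8 - Real.log (1 - q + q * Real.exp s) with hg
  set φ : ℝ → ℝ := fun s => q + s / 4 - q * Real.exp s / (1 - q + q * Real.exp s) with hφ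
  have hderh : ∀ s : ℝ, HasDerivAt (fun u : ℝ => 1 - q + q * Real.exp u) (q * Real.exp s) s := by
    intro s
    simpa using ((Real.hasDerivAt_exp s).const_mul q).const_add (1 - q)
  have hderg : ∀ s, HasDerivAt g (φ s) s := by
    intro s
    have h2 : HasDerivAt (fun u => Real.log (1 - q + q * Real.exp u))
        (q * Real.exp s / (1 - q + q * Real.exp s)) s := (hderh s).log (hpos s).ne'
    have h3 : HasDerivAt (fun u : ℝ => q * u + u ^ 2 / 8) (q + s / 4) s := by
      have h4 : HasDerivAt (fun u : ℝ => u ^ 2) (2 * s) s := by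
        simpa using hasDerivAt_pow 2 s
      have h5 := ((hasDerivAt_id s).const_mul q).add (h4.div_const 8)
      exact h5.congr_deriv (by ring)
    exact h3.sub h2
  have hderφ : ∀ s, HasDerivAt φ
      (1/4 - (q * Real.exp s * (1 - q + q * Real.exp s) - q * Real.exp s * (q * Real.exp s)) /
        (1 - q + q * Real.exp s) ^ 2) s := by
    intro s
    have h6 : HasDerivAt (fun u : ℝ => q * Real.exp u) (q * Real.exp s) s :=
      (Real.hasDerivAt_exp s).const_mul q
    have h7 := h6.div (hderh s) (hpos s).ne'
    have h8 : HasDerivAt (fun u : ℝ => q + u / 4) (1/4) s := by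
      simpa using ((hasDerivAt_id s).div_const 4).const_add q
    exact h8.sub h7
  have hφnonneg : ∀ s, (0:ℝ) ≤ 1/4 - (q * Real.exp s * (1 - q + q * Real.exp s) -
      q * Real.exp s * (q * Real.exp s)) / (1 - q + q * Real.exp s) ^ 2 := by
    intro s
    have h := hpos s
    have ha : 0 ≤ q * Real.exp s := mul_nonneg hq0 (Real.exp_pos s).le
    rw [sub_nonneg, div_le_iff₀ (by positivity)]
    nlinarith [sq_nonneg (1 - q + q * Real.exp s - 2 * (q * Real.exp s))]
  have hφmono : Monotone φ := by
    apply monotone_of_deriv_nonneg (fun s => (hderφ s).differentiableAt)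
    intro s
    rw [(hderφ s).deriv]
    exact hφnonneg s
  have hφ0 : φ 0 = 0 := by
    simp [hφ, Real.exp_zero]
  have hg0 : g 0 = 0 := by
    simp [hg, Real.exp_zero]
  have key : 0 ≤ g t := by
    rcases le_total 0 t with ht | ht
    · have : MonotoneOn g (Set.Ici 0) := by
        apply monotoneOn_of_deriv_nonneg (convex_Ici 0)
          (fun s _ => (hderg s).differentiableAt.continuousAt.continuousWithinAt)
          (fun s _ => (hderg s).differentiableAt.differentiableWithinAt)
        intro s hs
        rw [(hderg s).deriv]
        rw [interior_Ici] at hs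
        calc (0:ℝ) = φ 0 := hφ0.symm
        _ ≤ φ s := hφmono hs.le
      have := this (Set.self_mem_Ici) (Set.mem_Ici.2 ht) ht
      rwa [hg0] at this
    · have : AntitoneOn g (Set.Iic 0) := by
        apply antitoneOn_of_deriv_nonpos (convex_Iic 0)
          (fun s _ => (hderg s).differentiableAt.continuousAt.continuousWithinAt)
          (fun s _ => (hderg s).differentiableAt.differentiableWithinAt)
        intro s hs
        rw [(hderg s).deriv]
        rw [interior_Iic] at hs
        calc φ s ≤ φ 0 := hφmono hs.le
        _ = 0 := hφ0
      have := this (Set.mem_Iic.2 ht) (Set.self_mem_Iic) ht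
      rwa [hg0] at this
  have hlog : Real.log (1 - q + q * Real.exp t) ≤ q * t + t ^ 2 / 8 := by
    have : g t = q * t + t ^ 2 / 8 - Real.log (1 - q + q * Real.exp t) := rfl
    linarith [key, this ▸ key]
  calc 1 - q + q * Real.exp t = Real.exp (Real.log (1 - q + q * Real.exp t)) :=
        (Real.exp_log (hpos t)).symm
  _ ≤ Real.exp (q * t + t ^ 2 / 8) := Real.exp_le_exp.2 hlog

lemma subset_chernoff
    {Ω : Type*} [MeasurableSpace Ω] (P : Measure Ω) [IsProbabilityMeasure P]
    {I : Type*} [Fintype I] [DecidableEq I] [MeasurableSpace I] [MeasurableSingletonClass I]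
    (p : I → ℝ) (hp0 : ∀ i, 0 ≤ p i) (hp1 : ∑ i, p i = 1)
    (n : ℕ) (X : Fin n → Ω → I) (hmeas : ∀ k, Measurable (X k))
    (hindep : iIndepFun X P)
    (hdist : ∀ k i, P {ω | X k ω = i} = ENNReal.ofReal (p i))
    (A : Finset I) (ε : ℝ) (hε : 0 ≤ ε) :
    P {ω | (n:ℝ) * ε / 2 ≤ ∑ k, ((∑ i ∈ A, p i) - if X k ω ∈ A then (1:ℝ) else 0)}
      ≤ ENNReal.ofReal (Real.exp (-((n:ℝ) * ε ^ 2 / 2))) := by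
  set q : ℝ := ∑ i ∈ A, p i with hq
  have hq0 : 0 ≤ q := Finset.sum_nonneg fun i _ => hp0 i
  have hq1 : q ≤ 1 := by
    rw [← hp1]
    exact Finset.sum_le_sum_of_subset_of_nonneg (Finset.subset_univ A) fun i _ _ => hp0 i
  set g : I → ℝ := fun i => q - if i ∈ A then 1 else 0 with hgdef
  set Z : Fin n → Ω → ℝ := fun k ω => g (X k ω) with hZdef
  have hgm : Measurable g := measurable_of_countable g
  have hZmeas : ∀ k, Measurable (Z k) := fun k => hgm.comp (hmeas k)
  have hZindep : iIndepFun Z P :=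
    hindep.comp (fun _ => g) (fun _ => hgm)
  set t : ℝ := 2 * ε with ht_def
  have ht : 0 ≤ t := by positivity
  have hZbound : ∀ k ω, Z k ω ≤ q := by
    intro k ω
    simp only [hZdef, hgdef]
    split_ifs <;> linarith
  have hint : ∀ k, Integrable (fun ω => Real.exp (t * Z k ω)) P := by
    intro k
    refine Integrable.mono' (integrable_const (Real.exp (t * q)))
      (((hZmeas k).const_mul t).exp).aestronglyMeasurable (ae_of_all _ fun ω => ?_)
    rw [Real.norm_eq_abs, Real.abs_exp, Real.exp_le_exp]
    exact mul_le_mul_of_nonneg_left (hZbound k ω) ht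
  -- measure of the preimage set
  have hSmeas : ∀ k, MeasurableSet {ω | X k ω ∈ A} :=
    fun k => (hmeas k) (Set.Finite.measurableSet (A : Set I).toFinite)
  have hPS : ∀ k, P {ω | X k ω ∈ A} = ENNReal.ofReal q := by
    intro k
    have hset : {ω | X k ω ∈ A} = ⋃ i ∈ A, {ω | X k ω = i} := by
      ext ω; simp
    have hd : Set.PairwiseDisjoint (↑A) (fun i => {ω | X k ω = i}) := by
      intro i _ j _ hij
      refine Set.disjoint_left.2 fun ω h1 h2 => hij ?_
      simp only [Set.mem_setOf_eq] at h1 h2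
      rw [← h1, ← h2]
    rw [hset, measure_biUnion_finset hd fun i _ => (hmeas k) (measurableSet_singleton i)]
    simp_rw [hdist k]
    rw [← ENNReal.ofReal_sum_of_nonneg fun i _ => hp0 i]
  have hmgf : ∀ k, mgf (Z k) P t = Real.exp (t * q) * (1 - q + q * Real.exp (-t)) := by
    intro k
    have hfun : (fun ω => Real.exp (t * Z k ω)) = fun ω =>
        Real.exp (t * q) + Set.indicator {ω | X k ω ∈ A}
          (fun _ => Real.exp (t * (q - 1)) - Real.exp (t * q)) ω := by
      ext ω
      by_cases h : X k ω ∈ A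
      · simp only [hZdef, hgdef, h, if_true, Set.indicator_of_mem (show ω ∈ {ω | X k ω ∈ A} from h)]
        ring
      · simp only [hZdef, hgdef, h, if_false, sub_zero,
          Set.indicator_of_notMem (show ω ∉ {ω | X k ω ∈ A} from h), add_zero]
    rw [mgf, hfun, integral_add (integrable_const _) ((integrable_const _).indicator (hSmeas k)),
      integral_const, integral_indicator_const _ (hSmeas k), measureReal_def, measureReal_def, hPS k, measure_univ,
      ENNReal.toReal_ofReal hq0]
    rw [show t * (q - 1) = t * q + -t by ring, Real.exp_add]
    simp only [smul_eq_mul, ENNReal.toReal_one, one_mul]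
    ring
  have hmgf_le : ∀ k, mgf (Z k) P t ≤ Real.exp (t ^ 2 / 8) := by
    intro k
    have hb := bern_mgf_bound q hq0 hq1 (-t)
    rw [hmgf k]
    calc Real.exp (t * q) * (1 - q + q * Real.exp (-t))
        ≤ Real.exp (t * q) * Real.exp (q * -t + (-t) ^ 2 / 8) :=
          mul_le_mul_of_nonneg_left hb (Real.exp_pos _).le
      _ = Real.exp (t ^ 2 / 8) := by rw [← Real.exp_add]; congr 1; ring
  have hmgf_sum : mgf (∑ k, Z k) P t ≤ Real.exp ((n : ℝ) * t ^ 2 / 8) := by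
    rw [hZindep.mgf_sum hZmeas Finset.univ]
    calc ∏ k, mgf (Z k) P t ≤ ∏ _k : Fin n, Real.exp (t ^ 2 / 8) :=
          Finset.prod_le_prod (fun k _ => mgf_nonneg) fun k _ => hmgf_le k
      _ = Real.exp ((n : ℝ) * t ^ 2 / 8) := by
          rw [Finset.prod_const, Finset.card_univ, Fintype.card_fin, ← Real.exp_nat_mul]
          ring_nf
  have hint_sum : Integrable (fun ω => Real.exp (t * (∑ k, Z k) ω)) P :=
    hZindep.integrable_exp_mul_sum hZmeas fun k _ => hint k
  have hchern := measure_ge_le_exp_mul_mgf (X := ∑ k, Z k) (μ := P) ((n:ℝ) * ε / 2) ht hint_sum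
  have hsetEq : {ω | (n:ℝ) * ε / 2 ≤ ∑ k, ((∑ i ∈ A, p i) - if X k ω ∈ A then (1:ℝ) else 0)}
      = {ω | (n:ℝ) * ε / 2 ≤ (∑ k, Z k) ω} := by
    ext ω
    simp only [Set.mem_setOf_eq, Finset.sum_apply, hZdef, hgdef, ← hq]
  rw [hsetEq]
  have hfinal : (P {ω | (n:ℝ) * ε / 2 ≤ (∑ k, Z k) ω}).toReal
      ≤ Real.exp (-((n:ℝ) * ε ^ 2 / 2)) := by
    refine hchern.trans ?_
    calc Real.exp (-t * ((n:ℝ) * ε / 2)) * mgf (∑ k, Z k) P t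
        ≤ Real.exp (-t * ((n:ℝ) * ε / 2)) * Real.exp ((n : ℝ) * t ^ 2 / 8) :=
          mul_le_mul_of_nonneg_left hmgf_sum (Real.exp_pos _).le
      _ = Real.exp (-((n:ℝ) * ε ^ 2 / 2)) := by rw [← Real.exp_add]; congr 1; ring
  have := ENNReal.ofReal_le_ofReal hfinal
  rwa [ENNReal.ofReal_toReal (measure_ne_top P _)] at this

/-- **Weissman-type L1 concentration of the empirical distribution.**
Let `p` be a probability distribution on a finite set `I` with `|I| ≥ 2`, let `X₁, …, Xₙ`
(`n ≥ 1`) be i.i.d. samples from `p`, and let `p̂ₙ` be the empirical distribution,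
`p̂ₙ i ω = #{k : Xₖ ω = i} / n`.  Then for every `δ ∈ (0,1]`,
`P(‖p − p̂ₙ‖₁ ≥ √(2 log((2^|I| − 2)/δ)/n)) ≤ δ`, and consequently
`P(‖p − p̂ₙ‖₁ ≥ √(2·|I|·log(2/δ)/n)) ≤ δ`. -/
theorem weissman_L1_concentration
    {Ω : Type*} [MeasurableSpace Ω] (P : Measure Ω) [IsProbabilityMeasure P]
    {I : Type*} [Fintype I] [DecidableEq I] [MeasurableSpace I] [MeasurableSingletonClass I]
    (hI : 2 ≤ Fintype.card I)
    (p : I → ℝ) (hp0 : ∀ i, 0 ≤ p i) (hp1 : ∑ i, p i = 1)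
    (n : ℕ) (hn : 1 ≤ n)
    (X : Fin n → Ω → I) (hmeas : ∀ k, Measurable (X k))
    (hindep : iIndepFun X P)
    (hdist : ∀ k i, P {ω | X k ω = i} = ENNReal.ofReal (p i))
    (δ : ℝ) (hδ0 : 0 < δ) (hδ1 : δ ≤ 1) :
    P {ω | Real.sqrt (2 * Real.log (((2 : ℝ) ^ Fintype.card I - 2) / δ) / n) ≤
        ∑ i, |p i - ((Finset.univ.filter fun k => X k ω = i).card : ℝ) / n| }
      ≤ ENNReal.ofReal δ ∧
    P {ω | Real.sqrt (2 * Fintype.card I * Real.log (2 / δ) / n) ≤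
        ∑ i, |p i - ((Finset.univ.filter fun k => X k ω = i).card : ℝ) / n| }
      ≤ ENNReal.ofReal δ := by
  classical
  set S : ℕ := Fintype.card I with hS
  set M : ℝ := (2 : ℝ) ^ S - 2 with hM
  set ε : ℝ := Real.sqrt (2 * Real.log (M / δ) / n) with hε_def
  have hn0 : (0:ℝ) < n := by exact_mod_cast hn
  have hM4 : (4:ℝ) ≤ (2:ℝ) ^ S := by
    calc (4:ℝ) = 2 ^ 2 := by norm_num
    _ ≤ 2 ^ S := pow_le_pow_right₀ one_le_two hI
  have hM2 : (2:ℝ) ≤ M := by rw [hM]; linarith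
  have hMδ : (2:ℝ) ≤ M / δ := by
    rw [le_div_iff₀ hδ0]
    nlinarith
  have hlogpos : 0 < Real.log (M / δ) := Real.log_pos (by linarith)
  have hεpos : 0 < ε := Real.sqrt_pos.2 (by positivity)
  have hε2 : ε ^ 2 = 2 * Real.log (M / δ) / n := Real.sq_sqrt (by positivity)
  -- the empirical counts
  have hcount : ∀ ω, ∑ i, (((Finset.univ.filter fun k => X k ω = i).card : ℝ)) = n := by
    intro ω
    have := Finset.card_eq_sum_card_fiberwise
      (f := fun k : Fin n => X k ω) (s := Finset.univ) (t := Finset.univ)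
      (fun k _ => Finset.mem_univ _)
    rw [Finset.card_univ, Fintype.card_fin] at this
    exact_mod_cast this.symm
  have hsum0 : ∀ ω, ∑ i, (p i - ((Finset.univ.filter fun k => X k ω = i).card : ℝ) / n) = 0 := by
    intro ω
    rw [Finset.sum_sub_distrib, hp1, ← Finset.sum_div, hcount ω]
    field_simp
    simp
  -- events
  set EA : Finset I → Set Ω := fun A =>
    {ω | (n:ℝ) * ε / 2 ≤ ∑ k, ((∑ i ∈ A, p i) - if X k ω ∈ A then (1:ℝ) else 0)} with hEA
  set 𝒜 : Finset (Finset I) :=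
    ((Finset.univ : Finset I).powerset.erase ∅).erase Finset.univ with h𝒜
  -- per-ω reduction
  have key : ∀ A : Finset I, ∀ ω,
      ∑ k, ((∑ i ∈ A, p i) - if X k ω ∈ A then (1:ℝ) else 0)
        = n * ∑ i ∈ A, (p i - ((Finset.univ.filter fun k => X k ω = i).card : ℝ) / n) := by
    intro A ω
    have hcA : ((Finset.univ.filter fun k => X k ω ∈ A).card : ℝ)
        = ∑ i ∈ A, ((Finset.univ.filter fun k => X k ω = i).card : ℝ) := by
      have h1 := Finset.card_eq_sum_card_fiberwise
        (f := fun k : Fin n => X k ω) (s := Finset.univ.filter fun k => X k ω ∈ A) (t := A)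
        (fun k hk => (Finset.mem_filter.1 hk).2)
      have h2 : ∀ i ∈ A, (((Finset.univ.filter fun k => X k ω ∈ A).filter
          fun k => X k ω = i)).card = (Finset.univ.filter fun k => X k ω = i).card := by
        intro i hi
        congr 1
        rw [Finset.filter_filter]
        apply Finset.filter_congr
        intro k _
        constructor
        · exact fun h => h.2
        · exact fun h => ⟨by rw [h]; exact hi, h⟩
      have h1' := h1.trans (Finset.sum_congr rfl h2)
      exact_mod_cast h1'
    have hb : ∑ k, (if X k ω ∈ A then (1:ℝ) else 0)
        = ((Finset.univ.filter fun k => X k ω ∈ A).card : ℝ) := by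
      simp [Finset.sum_boole]
    have hrhs : ∑ i ∈ A, (n:ℝ) * (p i - ((Finset.univ.filter fun k => X k ω = i).card : ℝ) / n)
        = (n:ℝ) * ∑ i ∈ A, p i
          - ∑ i ∈ A, (((Finset.univ.filter fun k => X k ω = i).card : ℝ)) := by
      rw [Finset.mul_sum, ← Finset.sum_sub_distrib]
      apply Finset.sum_congr rfl
      intro i _
      field_simp
    rw [Finset.sum_sub_distrib, hb, hcA, Finset.sum_const, Finset.card_univ, Fintype.card_fin,
      nsmul_eq_mul]
    conv_rhs => rw [Finset.mul_sum]
    rw [hrhs]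
  have hsub : {ω | ε ≤ ∑ i, |p i - ((Finset.univ.filter fun k => X k ω = i).card : ℝ) / n|}
      ⊆ ⋃ A ∈ 𝒜, EA A := by
    intro ω hω
    simp only [Set.mem_setOf_eq] at hω
    set d : I → ℝ := fun i => p i - ((Finset.univ.filter fun k => X k ω = i).card : ℝ) / n with hd
    set A : Finset I := Finset.univ.filter fun i => 0 < d i with hA
    have hdsum : ∑ i, d i = 0 := hsum0 ω
    have habs : ∑ i ∈ A, d i = (∑ i, |d i|) / 2 := by
      have hsplit := Finset.sum_filter_add_sum_filter_not Finset.univ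
        (fun i => 0 < d i) (fun i => |d i|)
      have hsplit2 := Finset.sum_filter_add_sum_filter_not Finset.univ
        (fun i => 0 < d i) d
      have e1 : ∑ i ∈ A, |d i| = ∑ i ∈ A, d i :=
        Finset.sum_congr rfl fun i hi => abs_of_pos (Finset.mem_filter.1 hi).2
      have e2 : ∑ i ∈ Finset.univ.filter (fun i => ¬ 0 < d i), |d i|
          = -∑ i ∈ Finset.univ.filter (fun i => ¬ 0 < d i), d i := by
        rw [← Finset.sum_neg_distrib]
        exact Finset.sum_congr rfl fun i hi =>
          abs_of_nonpos (not_lt.1 (Finset.mem_filter.1 hi).2)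
      rw [hdsum] at hsplit2
      rw [e1, e2] at hsplit
      linarith
    have hAeps : ε / 2 ≤ ∑ i ∈ A, d i := by rw [habs]; linarith
    have hApos : 0 < ∑ i ∈ A, d i := lt_of_lt_of_le (by linarith) hAeps
    have hAne : A ≠ ∅ := by
      intro h
      rw [h, Finset.sum_empty] at hApos
      exact lt_irrefl _ hApos
    have hAnu : A ≠ Finset.univ := by
      intro h
      rw [h, hdsum] at hApos
      exact lt_irrefl _ hApos
    have hAmem : A ∈ 𝒜 := by
      rw [h𝒜]
      exact Finset.mem_erase.2 ⟨hAnu, Finset.mem_erase.2 ⟨hAne,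
        Finset.mem_powerset.2 (Finset.subset_univ A)⟩⟩
    refine Set.mem_biUnion hAmem ?_
    rw [hEA]
    simp only [Set.mem_setOf_eq]
    rw [key A ω]
    calc (n:ℝ) * ε / 2 = n * (ε / 2) := by ring
    _ ≤ n * ∑ i ∈ A, d i := by
        apply mul_le_mul_of_nonneg_left hAeps hn0.le
  -- union bound
  have hcard : (𝒜.card : ℝ) = M := by
    have h1 : (∅ : Finset I) ∈ (Finset.univ : Finset I).powerset :=
      Finset.mem_powerset.2 (Finset.empty_subset _)
    have hune : (Finset.univ : Finset I) ≠ ∅ := by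
      haveI : Nonempty I := Fintype.card_pos_iff.1 (by omega)
      apply Finset.nonempty_iff_ne_empty.1
      exact Finset.univ_nonempty
    have h2 : (Finset.univ : Finset I) ∈ (Finset.univ : Finset I).powerset.erase ∅ :=
      Finset.mem_erase.2 ⟨hune, Finset.mem_powerset.2 (Finset.Subset.refl _)⟩
    rw [h𝒜, Finset.card_erase_of_mem h2, Finset.card_erase_of_mem h1,
      Finset.card_powerset, Finset.card_univ, ← hS]
    have h4 : 4 ≤ 2 ^ S := by
      calc 4 = 2 ^ 2 := by norm_num
      _ ≤ 2 ^ S := Nat.pow_le_pow_right (by norm_num) hI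
    rw [hM]
    push_cast [Nat.cast_sub (by omega : 1 ≤ 2 ^ S), Nat.cast_sub (by omega : 1 ≤ 2 ^ S - 1)]
    push_cast
    ring
  have hexpδ : M * Real.exp (-((n:ℝ) * ε ^ 2 / 2)) = δ := by
    have h1 : (n:ℝ) * ε ^ 2 / 2 = Real.log (M / δ) := by
      rw [hε2]; field_simp
    rw [h1, Real.exp_neg, Real.exp_log (by linarith : (0:ℝ) < M / δ)]
    field_simp
  have first : P {ω | ε ≤
      ∑ i, |p i - ((Finset.univ.filter fun k => X k ω = i).card : ℝ) / n|}
      ≤ ENNReal.ofReal δ := by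
    calc P {ω | ε ≤ ∑ i, |p i - ((Finset.univ.filter fun k => X k ω = i).card : ℝ) / n|}
        ≤ P (⋃ A ∈ 𝒜, EA A) := measure_mono hsub
    _ ≤ ∑ A ∈ 𝒜, P (EA A) := measure_biUnion_finset_le 𝒜 EA
    _ ≤ ∑ A ∈ 𝒜, ENNReal.ofReal (Real.exp (-((n:ℝ) * ε ^ 2 / 2))) := by
        apply Finset.sum_le_sum
        intro A _
        exact subset_chernoff P p hp0 hp1 n X hmeas hindep hdist A ε hεpos.le
    _ = 𝒜.card • ENNReal.ofReal (Real.exp (-((n:ℝ) * ε ^ 2 / 2))) := by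
        rw [Finset.sum_const]
    _ = ENNReal.ofReal δ := by
        rw [nsmul_eq_mul, ← ENNReal.ofReal_natCast, ← ENNReal.ofReal_mul (by positivity),
          hcard, hexpδ]
  constructor
  · exact first
  · refine le_trans (measure_mono ?_) first
    intro ω hω
    simp only [Set.mem_setOf_eq] at hω ⊢
    refine le_trans ?_ hω
    rw [hε_def]
    apply Real.sqrt_le_sqrt
    have hlog2 : Real.log M ≤ (S:ℝ) * Real.log 2 := by
      calc Real.log M ≤ Real.log ((2:ℝ) ^ S) :=
            Real.log_le_log (by linarith) (by rw [hM]; linarith)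
      _ = (S:ℝ) * Real.log 2 := by rw [Real.log_pow]
    have hlogδ : Real.log δ ≤ 0 := Real.log_nonpos hδ0.le hδ1
    have hlogM : Real.log (M / δ) = Real.log M - Real.log δ :=
      Real.log_div (by linarith) hδ0.ne'
    have hlog2δ : Real.log (2 / δ) = Real.log 2 - Real.log δ :=
      Real.log_div (by norm_num) hδ0.ne'
    have hSR : (2:ℝ) ≤ (S:ℝ) := by exact_mod_cast hI
    have hkey : Real.log (M / δ) ≤ (S:ℝ) * Real.log (2 / δ) := by
      rw [hlogM, hlog2δ]
      nlinarith
    have : 2 * Real.log (M / δ) ≤ 2 * (S:ℝ) * Real.log (2 / δ) := by nlinarith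
    exact (div_le_div_iff_of_pos_right hn0).2 this
end
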